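/- In a tree concept hierarchy, if a concept c is in the supported set S(t) at time t but its parent is not in S(t), then c is supported purely bottom-up, i.e., c ∈ supp_{r,0}(B). -/
import Mathlib


open scoped Classical
noncomputable section

/-- A concept hierarchy: concepts at levels `0..L`, each concept at level `≥ 1`
has exactly `k` children one level below, level-0 concepts have no children,
there are exactly `k` top-level concepts, and every non-top concept has a parent. -/
structure ConceptHierarchy (α : Type) [DecidableEq α] where
  L : ℕ
  k : ℕ
  concepts : Finset α
  level : α → ℕ
  children : α → Finset α
  level_le : ∀ c ∈ concepts, level c ≤ L
  children_mem : ∀ c ∈ concepts, ∀ c' ∈ children c, c' ∈ concepts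
  children_level : ∀ c ∈ concepts, ∀ c' ∈ children c, level c' + 1 = level c
  children_card : ∀ c ∈ concepts, 1 ≤ level c → (children c).card = k
  children_leaf : ∀ c ∈ concepts, level c = 0 → children c = ∅
  top_card : (concepts.filter (fun c => level c = L)).card = k
  has_parent : ∀ c ∈ concepts, level c < L → ∃ c' ∈ concepts, c ∈ children c'

namespace ConceptHierarchy

variable {α : Type} [DecidableEq α]

/-- The parents of a concept. -/
def parents (H : ConceptHierarchy α) (c : α) : Finset α :=
  H.concepts.filter (fun c' => c ∈ H.children c')

/-- Limited overlap: each concept at level `≥ 1` shares at most `o·k` children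
with the union of the other concepts at the same level. -/
def LimitedOverlap (H : ConceptHierarchy α) (o : ℝ) : Prop :=
  ∀ c ∈ H.concepts, 1 ≤ H.level c →
    (((H.children c).filter (fun d => ∃ c' ∈ H.concepts, c' ≠ c ∧
        H.level c' = H.level c ∧ d ∈ H.children c')).card : ℝ) ≤ o * H.k

/-- Tree hierarchy: no overlap among child sets of distinct same-level concepts. -/
def IsTree (H : ConceptHierarchy α) : Prop :=
  ∀ c ∈ H.concepts, ∀ c' ∈ H.concepts, H.level c = H.level c' → c ≠ c' →
    Disjoint (H.children c) (H.children c')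

/-- Descendant relation: reflexive-transitive closure of the children relation. -/
inductive Desc (H : ConceptHierarchy α) : α → α → Prop
  | refl (c : α) : Desc H c c
  | step {c d e : α} : d ∈ H.children c → Desc H d e → Desc H c e

/-- The level-0 descendants of a concept. -/
def leaves (H : ConceptHierarchy α) (c : α) : Finset α :=
  H.concepts.filter (fun d => H.Desc c d ∧ H.level d = 0)

/-- Level-indexed bottom-up support sets: `S(0) = B ∩ C₀`,
`S(ℓ) = {c at level ℓ : |children(c) ∩ S(ℓ-1)| ≥ r·k}`. -/
def suppL (H : ConceptHierarchy α) (r : ℝ) (B : Finset α) : ℕ → Finset α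
  | 0 => B ∩ H.concepts.filter (fun c => H.level c = 0)
  | (ℓ+1) => H.concepts.filter (fun c => H.level c = ℓ + 1 ∧
      r * H.k ≤ ((H.children c ∩ suppL H r B ℓ).card : ℝ))

/-- `supp_r(B) = ⋃_ℓ S(ℓ)`. -/
def supp (H : ConceptHierarchy α) (r : ℝ) (B : Finset α) : Set α :=
  ⋃ ℓ, ↑(H.suppL r B ℓ)

/-- Time-and-level-indexed support sets with feedback strength `f`:
`S(0,t) = B`; `S(ℓ,0) = ∅` for `ℓ ≥ 1`; and
`S(ℓ,t) = S(ℓ,t-1) ∪ {c at level ℓ : |children(c) ∩ S(ℓ-1,t-1)| + f·|parents(c) ∩ S(ℓ+1,t-1)| ≥ r·k}`. -/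
def suppFB (H : ConceptHierarchy α) (r f : ℝ) (B : Finset α) : ℕ → ℕ → Finset α
  | 0, _ => B
  | (_+1), 0 => ∅
  | (ℓ+1), (t+1) => suppFB H r f B (ℓ+1) t ∪
      H.concepts.filter (fun c => H.level c = ℓ + 1 ∧
        r * H.k ≤ ((H.children c ∩ suppFB H r f B ℓ t).card : ℝ) +
          f * ((H.parents c ∩ suppFB H r f B (ℓ+2) t).card : ℝ))
  termination_by ℓ t => t

/-- `supp_{r,f}(B,*,t) = ⋃_ℓ S(ℓ,t)`. -/
def suppFBatTime (H : ConceptHierarchy α) (r f : ℝ) (B : Finset α) (t : ℕ) : Set α :=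
  ⋃ ℓ, ↑(H.suppFB r f B ℓ t)

/-- `supp_{r,f}(B) = ⋃_{ℓ,t} S(ℓ,t)`. -/
def suppFBSet (H : ConceptHierarchy α) (r f : ℝ) (B : Finset α) : Set α :=
  ⋃ t, H.suppFBatTime r f B t

end ConceptHierarchy

/-- Feed-forward 0/1 weights: weight 1 from the rep of a child to the rep of its
parent, weight 0 otherwise. -/
def ffWeight {α ν : Type} [DecidableEq α] (H : ConceptHierarchy α) (rep : α → ν)
    (u v : ν) : ℝ :=
  if ∃ c ∈ H.concepts, ∃ c' ∈ H.children c, u = rep c' ∧ v = rep c then 1 else 0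

/-- Feedback-network weights: weight 1 upward (rep of child to rep of parent),
weight `f` downward (rep of parent to rep of child), 0 otherwise. -/
def fbWeight {α ν : Type} [DecidableEq α] (H : ConceptHierarchy α) (rep : α → ν)
    (f : ℝ) (u v : ν) : ℝ :=
  if ∃ c ∈ H.concepts, ∃ c' ∈ H.children c, u = rep c' ∧ v = rep c then 1
  else if ∃ c ∈ H.concepts, ∃ c' ∈ H.children c, u = rep c ∧ v = rep c' then f
  else 0

namespace ConceptHierarchy

variable {α : Type} [DecidableEq α]

lemma suppFB_mono_step (H : ConceptHierarchy α) (r f : ℝ) (B : Finset α) (ℓ t : ℕ) :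
    H.suppFB r f B ℓ t ⊆ H.suppFB r f B ℓ (t + 1) := by
  cases ℓ with
  | zero => simp [suppFB]
  | succ m => rw [suppFB]; exact Finset.subset_union_left

lemma suppFB_mono (H : ConceptHierarchy α) (r f : ℝ) (B : Finset α) (ℓ : ℕ)
    {t t' : ℕ} (h : t ≤ t') : H.suppFB r f B ℓ t ⊆ H.suppFB r f B ℓ t' := by
  induction t' with
  | zero => simpa [Nat.le_zero.mp h] using Finset.Subset.refl _
  | succ s ih =>
    rcases Nat.lt_or_ge t (s + 1) with h' | h'
    · exact (ih (Nat.lt_succ_iff.mp h')).trans (H.suppFB_mono_step r f B ℓ s)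
    · simpa [Nat.le_antisymm h h'] using Finset.Subset.refl _

lemma key_lemma (H : ConceptHierarchy α) (hTree : H.IsTree) (r f : ℝ)
    (B : Finset α) :
    ∀ t ℓ c, c ∈ H.suppFB r f B ℓ t →
      (∀ p ∈ H.parents c, p ∉ H.suppFB r f B (ℓ + 1) (t - 1)) →
      c ∈ H.suppFB r 0 B ℓ t := by
  intro t
  induction t with
  | zero =>
    intro ℓ c hc _
    cases ℓ with
    | zero => rw [suppFB] at hc ⊢; exact hc
    | succ m => simp [suppFB] at hc
  | succ s ih =>
    intro ℓ c hc hp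
    cases ℓ with
    | zero => rw [suppFB] at hc ⊢; exact hc
    | succ m =>
      rw [suppFB] at hc ⊢
      simp only [Nat.add_sub_cancel] at hp
      by_cases hcs : c ∈ H.suppFB r f B (m + 1) s
      · refine Finset.mem_union_left _ (ih (m + 1) c hcs ?_)
        intro p hpP hpS
        exact hp p hpP (H.suppFB_mono r f B (m + 2) (Nat.sub_le s 1) hpS)
      · rcases Finset.mem_union.mp hc with h | h
        · exact absurd h hcs
        · rw [Finset.mem_filter] at h
          obtain ⟨hcC, hlev, hcard⟩ := h
          refine Finset.mem_union_right _ (Finset.mem_filter.mpr ⟨hcC, hlev, ?_⟩)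
          have hPempty : H.parents c ∩ H.suppFB r f B (m + 2) s = ∅ := by
            ext p
            simp only [Finset.mem_inter, Finset.notMem_empty, iff_false, not_and]
            exact fun hpP => hp p hpP
          rw [hPempty] at hcard
          simp only [Finset.card_empty, Nat.cast_zero, mul_zero, add_zero] at hcard
          have hsub : H.children c ∩ H.suppFB r f B m s ⊆
              H.children c ∩ H.suppFB r 0 B m s := by
            intro d hd
            rw [Finset.mem_inter] at hd ⊢
            obtain ⟨hdc, hdS⟩ := hd
            refine ⟨hdc, ih m d hdS ?_⟩
            intro p hpP hpS
            -- p is a parent of d; show p = c, contradicting hcs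
            rw [parents, Finset.mem_filter] at hpP
            obtain ⟨hpC, hdp⟩ := hpP
            have hdlev : H.level d + 1 = m + 1 := by
              rw [← hlev]; exact H.children_level c hcC d hdc
            have hplev : H.level p = m + 1 := by
              have := H.children_level p hpC d hdp
              omega
            have hpc : p = c := by
              by_contra hne
              have hdisj := hTree p hpC c hcC (by rw [hplev, hlev]) hne
              exact (Finset.disjoint_left.mp hdisj hdp) hdc
            subst hpc
            exact hcs (H.suppFB_mono r f B (m + 1) (Nat.sub_le s 1) hpS)
          calc (r : ℝ) * H.k ≤ ((H.children c ∩ H.suppFB r f B m s).card : ℝ) := hcard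
            _ ≤ ((H.children c ∩ H.suppFB r 0 B m s).card : ℝ) := by
                exact_mod_cast Finset.card_le_card hsub
            _ ≤ _ := by simp

end ConceptHierarchy

/-- in a tree hierarchy, if `c ∈ S(t)` but its parent is not in `S(t)`,
then `c` is supported purely bottom-up, i.e. `c ∈ supp_{r,0}(B)`. -/
theorem node_and_parent {α : Type} [DecidableEq α] (H : ConceptHierarchy α)
    (hTree : H.IsTree) (r f : ℝ) (hf : 0 ≤ f) (B : Finset α)
    (hB : ∀ b ∈ B, H.level b = 0) (t : ℕ) (c : α)
    (hc : c ∈ H.suppFBatTime r f B t)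
    (hp : ∀ p ∈ H.parents c, p ∉ H.suppFBatTime r f B t) :
    c ∈ H.suppFBSet r 0 B := by
  obtain ⟨ℓ, hℓ⟩ := Set.mem_iUnion.mp hc
  have hkey := H.key_lemma hTree r f B t ℓ c hℓ (fun p hpP hpS =>
    hp p hpP (Set.mem_iUnion.mpr ⟨ℓ + 1,
      H.suppFB_mono r f B (ℓ + 1) (Nat.sub_le t 1) hpS⟩))
  exact Set.mem_iUnion.mpr ⟨t, Set.mem_iUnion.mpr ⟨ℓ, hkey⟩⟩
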